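/- Let K be ℝ or ℂ and let G be an abelian subgroup of GL(n,K). If G has an orbit dense in K^n, then there exists a G-invariant dense open set U ⊆ K^n, whose complement is a union of at most n G-invariant linear subspaces of dimension n−1 or n−2, such that for every u ∈ U the orbit G(u) is dense in K^n. -/

import Mathlib

set_option synthInstance.maxHeartbeats 4000000
set_option maxHeartbeats 4000000
set_option maxRecDepth 8000
open Module Matrix


/-- A finite field extension of an `RCLike` field has degree 1 or 2. -/
lemma rclike_finrank_one_or_two (K : Type*) (L : Type*) [RCLike K] [Field L] [Algebra K L]
    [FiniteDimensional K L] : finrank K L = 1 ∨ finrank K L = 2 := by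
  letI : Algebra ℝ L := ((algebraMap K L).comp (algebraMap ℝ K)).toAlgebra
  haveI : IsScalarTower ℝ K L := IsScalarTower.of_algebraMap_eq fun x => rfl
  haveI : FiniteDimensional ℝ L := FiniteDimensional.trans ℝ K L
  haveI : Algebra.IsAlgebraic ℝ L := Algebra.IsAlgebraic.of_finite ℝ L
  let f : L →ₐ[ℝ] ℂ := IsAlgClosed.lift
  have h2 : finrank ℝ L ≤ finrank ℝ ℂ :=
    LinearMap.finrank_le_finrank_of_injective (f := f.toLinearMap)
      (RingHom.injective (f : L →+* ℂ))
  rw [Complex.finrank_real_complex] at h2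
  have hmul : finrank ℝ K * finrank K L = finrank ℝ L := Module.finrank_mul_finrank ℝ K L
  have h1 : 0 < finrank ℝ K := Module.finrank_pos
  have hL : 0 < finrank K L := Module.finrank_pos
  have : finrank K L ≤ finrank ℝ K * finrank K L := Nat.le_mul_of_pos_left _ h1
  omega

def glOrbit {K : Type*} [Field K] {n : ℕ} (G : Subgroup (Matrix.GeneralLinearGroup (Fin n) K))
    (v : Fin n → K) : Set (Fin n → K) :=
  {w | ∃ A ∈ G, (A : Matrix (Fin n) (Fin n) K).mulVec v = w}

section
variable {K : Type*} [RCLike K] {n : ℕ}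
  (G : Subgroup (Matrix.GeneralLinearGroup (Fin n) K))

/-- The set of matrices of elements of `G`. -/
def glSet : Set (Matrix (Fin n) (Fin n) K) :=
  (fun A : Matrix.GeneralLinearGroup (Fin n) K => (A : Matrix (Fin n) (Fin n) K)) '' G

/-- The subalgebra generated by `G`. -/
def glAlg : Subalgebra K (Matrix (Fin n) (Fin n) K) := Algebra.adjoin K (glSet G)

lemma mem_glAlg_of_mem {A : Matrix.GeneralLinearGroup (Fin n) K} (hA : A ∈ G) :
    (A : Matrix (Fin n) (Fin n) K) ∈ glAlg G :=
  Algebra.subset_adjoin ⟨A, hA, rfl⟩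

/-- evaluation at `u` as a linear map on the algebra. -/
noncomputable def glEval (u : Fin n → K) : glAlg G →ₗ[K] (Fin n → K) where
  toFun M := (M : Matrix (Fin n) (Fin n) K).mulVec u
  map_add' M N := by
    show ((M : Matrix (Fin n) (Fin n) K) + N).mulVec u = _
    rw [Matrix.add_mulVec]
  map_smul' c M := by
    show ((c • (M : Matrix (Fin n) (Fin n) K)).mulVec u) = _
    rw [Matrix.smul_mulVec]; rfl

lemma glEval_apply (u : Fin n → K) (M : glAlg G) :
    glEval G u M = (M : Matrix (Fin n) (Fin n) K).mulVec u := rfl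

end

section
variable {K : Type*} [RCLike K] {n : ℕ}
  (G : Subgroup (Matrix.GeneralLinearGroup (Fin n) K))

/-- The commutative ring structure on `glAlg G` for abelian `G`. -/
noncomputable def glCommRing
    (hGcomm : ∀ A ∈ G, ∀ B ∈ G, A * B = B * A) : CommRing (glAlg G) :=
  Algebra.adjoinCommRingOfComm K (by
    rintro a ⟨A, hA, rfl⟩ b ⟨B, hB, rfl⟩
    have := hGcomm A hA B hB
    calc (A : Matrix (Fin n) (Fin n) K) * B = ((A * B : Matrix.GeneralLinearGroup (Fin n) K) :
        Matrix (Fin n) (Fin n) K) := rfl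
      _ = ((B * A : Matrix.GeneralLinearGroup (Fin n) K) : Matrix (Fin n) (Fin n) K) := by
          rw [this]
      _ = (B : Matrix (Fin n) (Fin n) K) * A := rfl)

variable (hGcomm : ∀ A ∈ G, ∀ B ∈ G, A * B = B * A)

include hGcomm in
lemma glAlg_comm {x y : Matrix (Fin n) (Fin n) K} (hx : x ∈ glAlg G) (hy : y ∈ glAlg G) :
    x * y = y * x := by
  letI := glCommRing G hGcomm
  have : (⟨x, hx⟩ * ⟨y, hy⟩ : glAlg G) = ⟨y, hy⟩ * ⟨x, hx⟩ := mul_comm _ _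
  simpa using congrArg Subtype.val this

variable {v : Fin n → K} (hv : Dense (glOrbit G v))

include hv in
lemma glEval_surjective : Function.Surjective (glEval G v) := by
  have hsub : glOrbit G v ⊆ (LinearMap.range (glEval G v) : Set (Fin n → K)) := by
    rintro w ⟨A, hA, rfl⟩
    exact ⟨⟨(A : Matrix (Fin n) (Fin n) K), mem_glAlg_of_mem G hA⟩, rfl⟩
  have hclosed : IsClosed ((LinearMap.range (glEval G v)) : Set (Fin n → K)) :=
    Submodule.closed_of_finiteDimensional _
  have htop : (LinearMap.range (glEval G v) : Set (Fin n → K)) = Set.univ := by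
    apply Set.eq_univ_of_univ_subset
    rw [← hv.closure_eq]
    exact hclosed.closure_subset_iff.mpr hsub
  rw [← LinearMap.range_eq_top]
  exact Submodule.eq_top_iff'.mpr fun x => by
    have : x ∈ (LinearMap.range (glEval G v) : Set (Fin n → K)) := htop ▸ Set.mem_univ x
    exact this

include hGcomm hv in
lemma glEval_injective : Function.Injective (glEval G v) := by
  rw [← LinearMap.ker_eq_bot]
  refine (Submodule.eq_bot_iff _).mpr fun M hM => ?_
  have h0 : (M : Matrix (Fin n) (Fin n) K).mulVec v = 0 := hM
  have hall : ∀ w : Fin n → K, (M : Matrix (Fin n) (Fin n) K).mulVec w = 0 := by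
    intro w
    obtain ⟨N, rfl⟩ := glEval_surjective G hv w
    rw [glEval_apply, Matrix.mulVec_mulVec, glAlg_comm G hGcomm M.2 N.2,
      ← Matrix.mulVec_mulVec, h0, Matrix.mulVec_zero]
  have : (M : Matrix (Fin n) (Fin n) K) = 0 := by
    apply Matrix.toLin'.injective
    ext w
    simpa [Matrix.toLin'_apply] using congrFun (hall (Pi.single w 1)) _
  exact Subtype.ext this
end

section
variable {K : Type*} [RCLike K] {n : ℕ}
  (G : Subgroup (Matrix.GeneralLinearGroup (Fin n) K))
  (hGcomm : ∀ A ∈ G, ∀ B ∈ G, A * B = B * A)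
  {v : Fin n → K} (hv : Dense (glOrbit G v))

include hGcomm hv in
lemma glSurj_iff (u : Fin n → K) :
    Function.Surjective (glEval G u) ↔
      ∃ C : glAlg G, IsUnit C ∧ (C : Matrix (Fin n) (Fin n) K).mulVec v = u := by
  constructor
  · intro hu
    obtain ⟨C, hC⟩ := glEval_surjective G hv u
    obtain ⟨M, hM⟩ := hu v
    have hC' : (C : Matrix (Fin n) (Fin n) K).mulVec v = u := hC
    have hM' : (M : Matrix (Fin n) (Fin n) K).mulVec u = v := hM
    have hMC : M * C = 1 := by
      apply glEval_injective G hGcomm hv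
      rw [glEval_apply, glEval_apply]
      show ((M : Matrix (Fin n) (Fin n) K) * C).mulVec v = (1 : Matrix (Fin n) (Fin n) K).mulVec v
      rw [← Matrix.mulVec_mulVec, hC', hM', Matrix.one_mulVec]
    have hCM : C * M = 1 := by
      apply Subtype.ext
      have := congrArg Subtype.val hMC
      simpa [glAlg_comm G hGcomm C.2 M.2] using this
    exact ⟨C, ⟨⟨C, M, hCM, hMC⟩, rfl⟩, hC⟩
  · rintro ⟨C, hCunit, rfl⟩
    intro w
    obtain ⟨M, hM⟩ := glEval_surjective G hv w
    obtain ⟨cu, rfl⟩ := hCunit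
    refine ⟨M * ↑cu⁻¹, ?_⟩
    rw [glEval_apply]
    show ((M * ↑cu⁻¹ : glAlg G) : Matrix (Fin n) (Fin n) K).mulVec _ = w
    rw [Matrix.mulVec_mulVec]
    have : ((M * ↑cu⁻¹ : glAlg G) : Matrix (Fin n) (Fin n) K) * ((cu : glAlg G) :
        Matrix (Fin n) (Fin n) K) = (M : Matrix (Fin n) (Fin n) K) := by
      have h1 : ((↑cu⁻¹ * ↑cu : glAlg G) : Matrix (Fin n) (Fin n) K)
          = (1 : glAlg G) := by rw [Units.inv_mul]
      show ((M : Matrix (Fin n) (Fin n) K) * _) * _ = _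
      rw [Matrix.mul_assoc]
      show (M : Matrix (Fin n) (Fin n) K) * ((↑cu⁻¹ * ↑cu : glAlg G) :
        Matrix (Fin n) (Fin n) K) = _
      rw [h1]
      simp
    rw [this, ← glEval_apply, hM]

include hGcomm hv in
lemma glFinrank : finrank K (glAlg G) = n := by
  have e := LinearEquiv.ofBijective (glEval G v)
    ⟨glEval_injective G hGcomm hv, glEval_surjective G hv⟩
  rw [e.finrank_eq, Module.finrank_fin_fun]

include hGcomm hv in
lemma glU_isOpen : IsOpen {u | Function.Surjective (glEval G u)} := by
  classical
  set b := Module.finBasisOfFinrankEq K (glAlg G) (glFinrank G hGcomm hv) with hb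
  set F : (Fin n → K) →ₗ[K] Matrix (Fin n) (Fin n) K :=
    { toFun := fun u => Matrix.of fun i j => ((b j : Matrix (Fin n) (Fin n) K).mulVec u) i
      map_add' := by
        intro x y; ext i j
        simp [Matrix.mulVec_add]
      map_smul' := by
        intro c x; ext i j
        simp [Matrix.mulVec_smul] } with hF
  have hcomp : ∀ u c, (F u).mulVec c = glEval G u (b.equivFun.symm c) := by
    intro u c
    have hsum : ((b.equivFun.symm c : glAlg G) : Matrix (Fin n) (Fin n) K)
        = ∑ j, c j • ((b j : glAlg G) : Matrix (Fin n) (Fin n) K) := by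
      rw [Basis.equivFun_symm_apply]
      push_cast
      rfl
    rw [glEval_apply, hsum]
    have hrw : ((∑ j, c j • ((b j : glAlg G) : Matrix (Fin n) (Fin n) K)) *ᵥ u)
        = ∑ j, c j • (((b j : glAlg G) : Matrix (Fin n) (Fin n) K) *ᵥ u) := by
      have h1 : Matrix.toLin' (∑ j, c j • ((b j : glAlg G) : Matrix (Fin n) (Fin n) K))
          = ∑ j, Matrix.toLin' (c j • ((b j : glAlg G) : Matrix (Fin n) (Fin n) K)) :=
        map_sum _ _ _
      rw [← Matrix.toLin'_apply, h1]
      simp [Matrix.toLin'_apply, Matrix.smul_mulVec, LinearMap.sum_apply]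
    rw [hrw]
    ext i
    simp [hF, Matrix.mulVec, dotProduct, mul_comm]
  have hiff : ∀ u, Function.Surjective (glEval G u)
      ↔ Function.Surjective ((F u).mulVec) := by
    intro u
    have hc : (F u).mulVec = (glEval G u) ∘ b.equivFun.symm := funext (hcomp u)
    rw [hc, Function.Surjective.of_comp_iff _ (b.equivFun.symm.surjective)]
  have key : {u | Function.Surjective (glEval G u)}
      = (fun u => (F u).det) ⁻¹' ({0}ᶜ : Set K) := by
    ext u
    simp only [Set.mem_setOf_eq, Set.mem_preimage, Set.mem_compl_iff, Set.mem_singleton_iff]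
    rw [hiff u, Matrix.mulVec_surjective_iff_isUnit, Matrix.isUnit_iff_isUnit_det,
      isUnit_iff_ne_zero, ne_eq]
  rw [key]
  exact (isOpen_compl_singleton).preimage ((F.continuous_of_finiteDimensional).matrix_det)
end

section
variable {K : Type*} [RCLike K] {n : ℕ}
  (G : Subgroup (Matrix.GeneralLinearGroup (Fin n) K))
  (hGcomm : ∀ A ∈ G, ∀ B ∈ G, A * B = B * A)
  {v : Fin n → K} (hv : Dense (glOrbit G v))

include hv in
lemma glU_dense : Dense {u | Function.Surjective (glEval G u)} := by
  apply hv.mono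
  rintro w ⟨B, hB, rfl⟩
  intro w'
  obtain ⟨M, hM⟩ := glEval_surjective G hv w'
  have hM' : (M : Matrix (Fin n) (Fin n) K).mulVec v = w' := hM
  set X : glAlg G := ⟨((B⁻¹ : Matrix.GeneralLinearGroup (Fin n) K) :
    Matrix (Fin n) (Fin n) K), mem_glAlg_of_mem G (inv_mem hB)⟩ with hXdef
  have hX : (X : Matrix (Fin n) (Fin n) K)
      = ((B⁻¹ : Matrix.GeneralLinearGroup (Fin n) K) : Matrix (Fin n) (Fin n) K) := rfl
  refine ⟨M * X, ?_⟩
  rw [glEval_apply, MulMemClass.coe_mul, hX, Matrix.mulVec_mulVec, Matrix.mul_assoc,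
    Units.inv_mul, Matrix.mul_one, hM']

include hGcomm hv in
lemma glU_invariant {B : Matrix.GeneralLinearGroup (Fin n) K} (hB : B ∈ G) {u : Fin n → K}
    (hu : Function.Surjective (glEval G u)) :
    Function.Surjective (glEval G ((B : Matrix (Fin n) (Fin n) K).mulVec u)) := by
  intro w
  obtain ⟨M, hM⟩ := hu ((B⁻¹ : Matrix.GeneralLinearGroup (Fin n) K) *ᵥ w)
  have hM' : (M : Matrix (Fin n) (Fin n) K).mulVec u
      = (B⁻¹ : Matrix.GeneralLinearGroup (Fin n) K) *ᵥ w := hM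
  refine ⟨M, ?_⟩
  show (M : Matrix (Fin n) (Fin n) K) *ᵥ ((B : Matrix (Fin n) (Fin n) K) *ᵥ u) = w
  rw [Matrix.mulVec_mulVec, glAlg_comm G hGcomm M.2 (mem_glAlg_of_mem G hB),
    ← Matrix.mulVec_mulVec, hM', Matrix.mulVec_mulVec, Units.mul_inv, Matrix.one_mulVec]
  

include hGcomm hv in
lemma glOrbit_dense_of_mem {u : Fin n → K} (hu : Function.Surjective (glEval G u)) :
    Dense (glOrbit G u) := by
  obtain ⟨C, hCu, hCv⟩ := (glSurj_iff G hGcomm hv u).mp hu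
  obtain ⟨cu, rfl⟩ := hCu
  set Cm : Matrix (Fin n) (Fin n) K := ((cu : glAlg G) : Matrix (Fin n) (Fin n) K) with hCm
  set Dm : Matrix (Fin n) (Fin n) K := ((↑cu⁻¹ : glAlg G) : Matrix (Fin n) (Fin n) K) with hDm
  have hCD : Cm * Dm = 1 := by
    have h := congrArg (Subtype.val) (Units.mul_inv cu)
    rwa [MulMemClass.coe_mul, OneMemClass.coe_one] at h
  have hDC : Dm * Cm = 1 := by
    have h := congrArg (Subtype.val) (Units.inv_mul cu)
    rwa [MulMemClass.coe_mul, OneMemClass.coe_one] at h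
  have himg : glOrbit G u = (fun x => Cm *ᵥ x) '' glOrbit G v := by
    ext w
    constructor
    · rintro ⟨B, hB, rfl⟩
      refine ⟨(B : Matrix (Fin n) (Fin n) K) *ᵥ v, ⟨B, hB, rfl⟩, ?_⟩
      show Cm *ᵥ ((B : Matrix (Fin n) (Fin n) K) *ᵥ v) = (B : Matrix (Fin n) (Fin n) K) *ᵥ u
      rw [← hCv, Matrix.mulVec_mulVec, Matrix.mulVec_mulVec,
        glAlg_comm G hGcomm (cu : glAlg G).2 (mem_glAlg_of_mem G hB)]
    · rintro ⟨x, ⟨B, hB, rfl⟩, rfl⟩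
      refine ⟨B, hB, ?_⟩
      show (B : Matrix (Fin n) (Fin n) K) *ᵥ u = Cm *ᵥ ((B : Matrix (Fin n) (Fin n) K) *ᵥ v)
      rw [← hCv, Matrix.mulVec_mulVec, Matrix.mulVec_mulVec,
        glAlg_comm G hGcomm (cu : glAlg G).2 (mem_glAlg_of_mem G hB)]
  rw [himg, dense_iff_closure_eq]
  apply Set.eq_univ_of_univ_subset
  have hsurj : (fun x => Cm *ᵥ x) '' Set.univ = Set.univ :=
    Set.eq_univ_of_forall fun x => ⟨Dm *ᵥ x, Set.mem_univ _,
      by show Cm *ᵥ (Dm *ᵥ x) = x; rw [Matrix.mulVec_mulVec, hCD, Matrix.one_mulVec]⟩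
  have hcont : Continuous (fun x : Fin n → K => Cm *ᵥ x) :=
    (Matrix.mulVecLin Cm).continuous_of_finiteDimensional
  calc Set.univ = (fun x => Cm *ᵥ x) '' closure (glOrbit G v) := by
        rw [hv.closure_eq, Set.image_univ, ← Set.image_univ, hsurj]
    _ ⊆ closure ((fun x => Cm *ᵥ x) '' glOrbit G v) := image_closure_subset_closure_image hcont
end
theorem dense_orbit {K : Type*} [RCLike K] (n : ℕ)
    (G : Subgroup (Matrix.GeneralLinearGroup (Fin n) K))
    (hGcomm : ∀ A ∈ G, ∀ B ∈ G, A * B = B * A)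
    (hdense : ∃ v : Fin n → K, Dense (glOrbit G v)) :
    ∃ U : Set (Fin n → K),
      IsOpen U ∧ Dense U ∧
      (∀ A ∈ G, ∀ v ∈ U, (A : Matrix (Fin n) (Fin n) K).mulVec v ∈ U) ∧
      (∃ (r : ℕ) (V : Fin r → Submodule K (Fin n → K)), r ≤ n ∧
        (∀ k, ∀ A ∈ G, ∀ x ∈ V k, (A : Matrix (Fin n) (Fin n) K).mulVec x ∈ V k) ∧
        (∀ k, Module.finrank K (V k) = n - 1 ∨ Module.finrank K (V k) = n - 2) ∧
        Uᶜ = ⋃ k, (V k : Set (Fin n → K))) ∧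
      (∀ u ∈ U, Dense (glOrbit G u)) := by
  classical
  obtain ⟨v, hv⟩ := hdense
  letI : CommRing (glAlg G) :=
    { (inferInstance : Ring (glAlg G)) with mul_comm := (glCommRing G hGcomm).mul_comm }
  letI : IsArtinianRing (glAlg G) := isArtinian_of_tower K isArtinian_of_fg_of_artinian'
  have hfr : finrank K (glAlg G) = n := glFinrank G hGcomm hv
  set e : glAlg G ≃ₗ[K] (Fin n → K) := LinearEquiv.ofBijective (glEval G v)
    ⟨glEval_injective G hGcomm hv, glEval_surjective G hv⟩ with he
  have heapp : ∀ C : glAlg G, e C = (C : Matrix (Fin n) (Fin n) K).mulVec v := fun C => rfl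
  refine ⟨{u | Function.Surjective (glEval G u)}, glU_isOpen G hGcomm hv, glU_dense G hv,
    fun B hB u hu => glU_invariant G hGcomm hv hB hu, ?_, fun u hu => glOrbit_dense_of_mem G hGcomm hv hu⟩
  -- the complement structure
  have hfin : {I : Ideal (glAlg G) | I.IsMaximal}.Finite :=
    IsArtinianRing.setOfPred_isMaximal_finite (glAlg G)
  set r := hfin.toFinset.card with hr
  set mI : Fin r → Ideal (glAlg G) := fun k => (hfin.toFinset.equivFin.symm k : _) with hmI
  have hmmax : ∀ k, (mI k).IsMaximal := by
    intro k
    have := (hfin.toFinset.equivFin.symm k).2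
    rwa [Set.Finite.mem_toFinset] at this
  have hmsurj : ∀ I : Ideal (glAlg G), I.IsMaximal → ∃ k, mI k = I := by
    intro I hI
    refine ⟨hfin.toFinset.equivFin ⟨I, hfin.mem_toFinset.mpr hI⟩, ?_⟩
    simp [hmI]
  have hminj : Function.Injective mI := by
    intro k l h
    have := Subtype.val_injective (a₁ := hfin.toFinset.equivFin.symm k) h
    exact hfin.toFinset.equivFin.symm.injective this
  -- finite dimensionality of quotients
  haveI hFD : ∀ k, FiniteDimensional K (glAlg G ⧸ mI k) := fun k =>
    Module.Finite.of_surjective (Ideal.Quotient.mkₐ K (mI k)).toLinearMap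
      (Ideal.Quotient.mkₐ_surjective K (mI k))
  haveI hNT : ∀ k, Nontrivial (glAlg G ⧸ mI k) := fun k =>
    Ideal.Quotient.nontrivial_iff.mpr (hmmax k).ne_top
  set V : Fin r → Submodule K (Fin n → K) :=
    fun k => Submodule.map e.toLinearMap ((mI k).restrictScalars K) with hV
  refine ⟨r, V, ?_, ?_, ?_, ?_⟩
  · -- r ≤ n
    have hpair : Pairwise fun i j => IsCoprime (mI i) (mI j) := fun i j hij =>
      (Ideal.isCoprime_iff_sup_eq).mpr
        (Ideal.IsMaximal.coprime_of_ne (hmmax i) (hmmax j) (fun h => hij (hminj h)))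
    set g : glAlg G →ₗ[K] (Π k, glAlg G ⧸ mI k) :=
      LinearMap.pi fun k => (Ideal.Quotient.mkₐ K (mI k)).toLinearMap with hg
    have hgsurj : Function.Surjective g := by
      intro x
      obtain ⟨a, ha⟩ := Ideal.pi_quotient_surjective hpair x
      exact ⟨a, funext fun k => ha k⟩
    have hrank : finrank K (Π k, glAlg G ⧸ mI k) ≤ finrank K (glAlg G) := by
      have h1 := g.finrank_range_le
      rwa [LinearMap.range_eq_top.mpr hgsurj, finrank_top] at h1
    have hsum : finrank K (Π k, glAlg G ⧸ mI k) = ∑ k, finrank K (glAlg G ⧸ mI k) :=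
      Module.finrank_pi_fintype K
    calc r = ∑ _k : Fin r, 1 := by simp [hr]
      _ ≤ ∑ k, finrank K (glAlg G ⧸ mI k) :=
          Finset.sum_le_sum fun k _ => Module.finrank_pos
      _ = finrank K (Π k, glAlg G ⧸ mI k) := hsum.symm
      _ ≤ n := le_trans hrank (le_of_eq hfr)
  · -- invariance
    intro k B hB x hx
    obtain ⟨C, hCmem, rfl⟩ := Submodule.mem_map.mp hx
    refine Submodule.mem_map.mpr ⟨⟨(B : Matrix (Fin n) (Fin n) K), mem_glAlg_of_mem G hB⟩ * C,
      Ideal.mul_mem_left _ _ hCmem, ?_⟩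
    show ((_ * C : glAlg G) : Matrix (Fin n) (Fin n) K) *ᵥ v = _
    rw [MulMemClass.coe_mul, ← Matrix.mulVec_mulVec]
    rfl
  · -- dimensions
    intro k
    haveI := hmmax k
    letI : Field (glAlg G ⧸ mI k) := Ideal.Quotient.field (mI k)
    have hdim : finrank K (glAlg G ⧸ mI k) = 1 ∨ finrank K (glAlg G ⧸ mI k) = 2 :=
      rclike_finrank_one_or_two K _
    have hVk : finrank K (V k) = finrank K ((mI k).restrictScalars K) :=
      LinearEquiv.finrank_map_eq e _
    have hquot : finrank K (glAlg G ⧸ ((mI k).restrictScalars K))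
        = finrank K (glAlg G ⧸ mI k) :=
      (Submodule.Quotient.restrictScalarsEquiv K (mI k)).finrank_eq
    have hrn := Submodule.finrank_quotient_add_finrank ((mI k).restrictScalars K)
    rw [hfr, hquot] at hrn
    rw [hVk]
    omega
  · -- complement
    ext u
    simp only [Set.mem_compl_iff, Set.mem_setOf_eq, Set.mem_iUnion, SetLike.mem_coe]
    constructor
    · intro hu
      obtain ⟨C, hC⟩ := glEval_surjective G hv u
      have hCnu : C ∈ nonunits (glAlg G) := by
        rw [mem_nonunits_iff]
        intro hunit
        exact hu ((glSurj_iff G hGcomm hv u).mpr ⟨C, hunit, hC⟩)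
      obtain ⟨I, hImax, hCI⟩ := exists_max_ideal_of_mem_nonunits hCnu
      obtain ⟨k, rfl⟩ := hmsurj I hImax
      exact ⟨k, Submodule.mem_map.mpr ⟨C, hCI, hC⟩⟩
    · rintro ⟨k, hk⟩ hu
      obtain ⟨C, hCmem, hCu⟩ := Submodule.mem_map.mp hk
      obtain ⟨C', hC'unit, hC'v⟩ := (glSurj_iff G hGcomm hv u).mp hu
      have : C' = C := glEval_injective G hGcomm hv (by rw [glEval_apply, hC'v]; exact hCu.symm)
      rw [this] at hC'unit
      exact (hmmax k).ne_top (Ideal.eq_top_of_isUnit_mem _ hCmem hC'unit)
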